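/- Let X₁,…,Xₙ be centered independent random variables and X̃₁,…,X̃ₙ centered independent random variables, p ≥ 2 an even integer, with a‖X_i‖_q ≤ ‖X̃_i‖_q ≤ b‖X_i‖_q for all 1 ≤ q ≤ p and all i. Define |||(X₁,…,Xₙ)|||_p := inf{ t > 0 : Σ_i log E[ (|X_i/t + 1|^p + |−X_i/t + 1|^p)/2 ] ≤ p }. Then a·|||(X₁,…,Xₙ)|||_p ≤ |||(X̃₁,…,X̃ₙ)|||_p ≤ b·|||(X₁,…,Xₙ)|||_p. -/

import Mathlib

open MeasureTheory ProbabilityTheory Real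

/-- The Latala functional `|||(X₁,…,Xₙ)|||_p`. -/
noncomputable def latalaNorm {Ω : Type*} [MeasureSpace Ω]
    {n : ℕ} (X : Fin n → Ω → ℝ) (p : ℕ) : ℝ :=
  sInf {t : ℝ | 0 < t ∧
    ∑ i, Real.log
        (∫ ω, (|X i ω / t + 1| ^ p + |-(X i ω) / t + 1| ^ p) / 2 ∂ℙ) ≤ p}

section Aux
variable {Ω : Type*} [MeasureSpace Ω] [IsProbabilityMeasure (ℙ : Measure Ω)]

lemma latala_pointwise {p : ℕ} (hpe : Even p) (x : ℝ) :
    (|x + 1| ^ p + |-x + 1| ^ p) / 2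
      = ∑ k ∈ Finset.range (p + 1), if Even k then (p.choose k : ℝ) * x ^ k else 0 := by
  rw [hpe.pow_abs, hpe.pow_abs, add_pow, add_pow, ← Finset.sum_add_distrib, Finset.sum_div]
  refine Finset.sum_congr rfl fun k _ => ?_
  rcases Nat.even_or_odd k with hk | hk
  · rw [if_pos hk, hk.neg_pow]; ring
  · rw [if_neg (Nat.not_even_iff_odd.mpr hk), hk.neg_pow]; ring

lemma latala_integrable_abs_pow {f : Ω → ℝ} {p k : ℕ} (hf : MemLp f p ℙ) (hk : k ≤ p) :
    Integrable (fun ω => |f ω| ^ k) ℙ := by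
  rcases Nat.eq_zero_or_pos k with rfl | hk0
  · simp only [pow_zero]; exact integrable_const 1
  · have h1 : MemLp f k ℙ := hf.mono_exponent (by exact_mod_cast hk)
    have h2 := h1.integrable_norm_rpow (by exact_mod_cast hk0.ne') (by simp)
    refine h2.congr (Filter.Eventually.of_forall fun ω => ?_)
    simp [Real.norm_eq_abs, Real.rpow_natCast]

lemma latala_expand {f : Ω → ℝ} {p : ℕ} (hpe : Even p) (hf : MemLp f p ℙ) {t : ℝ} (ht : 0 < t) :
    ∫ ω, (|f ω / t + 1| ^ p + |-(f ω) / t + 1| ^ p) / 2 ∂ℙ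
      = ∑ k ∈ Finset.range (p + 1),
          if Even k then (p.choose k : ℝ) * (∫ ω, |f ω| ^ k ∂ℙ) / t ^ k else 0 := by
  have hpt : ∀ ω, (|f ω / t + 1| ^ p + |-(f ω) / t + 1| ^ p) / 2
      = ∑ k ∈ Finset.range (p + 1),
          if Even k then (p.choose k : ℝ) * |f ω| ^ k / t ^ k else 0 := by
    intro ω
    rw [neg_div, latala_pointwise hpe (f ω / t)]
    refine Finset.sum_congr rfl fun k _ => ?_
    by_cases hk : Even k
    · rw [if_pos hk, if_pos hk, div_pow, ← hk.pow_abs (f ω), mul_div_assoc]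
    · rw [if_neg hk, if_neg hk]
  rw [integral_congr_ae (Filter.Eventually.of_forall hpt), integral_finset_sum]
  · refine Finset.sum_congr rfl fun k hk => ?_
    by_cases hke : Even k
    · simp only [if_pos hke, integral_div, integral_const_mul]
    · simp only [if_neg hke, integral_zero]
  · intro k hk
    by_cases hke : Even k
    · simp only [if_pos hke]
      exact (((latala_integrable_abs_pow hf (Nat.lt_succ_iff.mp (Finset.mem_range.mp hk))).const_mul
        _).div_const _)
    · simp only [if_neg hke]
      exact integrable_const 0

lemma latala_split {p : ℕ} (c : ℕ → ℝ) (hc0 : c 0 = 1) :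
    ∑ k ∈ Finset.range (p + 1), (if Even k then c k else 0)
      = 1 + ∑ k ∈ Finset.range (p + 1), (if Even k ∧ k ≠ 0 then c k else 0) := by
  have : ∀ k ∈ Finset.range (p + 1), (if Even k then c k else 0)
      = (if k = 0 then (1:ℝ) else 0) + (if Even k ∧ k ≠ 0 then c k else 0) := by
    intro k _
    rcases eq_or_ne k 0 with rfl | hk
    · simp [hc0]
    · by_cases hke : Even k
      · simp [hke, hk]
      · simp [hke, hk]
  rw [Finset.sum_congr rfl this, Finset.sum_add_distrib, Finset.sum_ite_eq' (Finset.range (p+1)) 0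
    (fun _ => (1:ℝ))]
  simp

lemma latala_mom_zero {f : Ω → ℝ} : ∫ ω, |f ω| ^ (0:ℕ) ∂ℙ = 1 := by simp

lemma latala_mom_nonneg {f : Ω → ℝ} {k : ℕ} : 0 ≤ ∫ ω, |f ω| ^ k ∂ℙ :=
  integral_nonneg fun ω => pow_nonneg (abs_nonneg _) _

lemma latala_one_le_G {f : Ω → ℝ} {p : ℕ} {t : ℝ} (ht : 0 < t) :
    (1:ℝ) ≤ ∑ k ∈ Finset.range (p + 1),
        if Even k then (p.choose k : ℝ) * (∫ ω, |f ω| ^ k ∂ℙ) / t ^ k else 0 := by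
  rw [latala_split (fun k => (p.choose k : ℝ) * (∫ ω, |f ω| ^ k ∂ℙ) / t ^ k) (by simp)]
  have : 0 ≤ ∑ k ∈ Finset.range (p + 1),
      (if Even k ∧ k ≠ 0 then (p.choose k : ℝ) * (∫ ω, |f ω| ^ k ∂ℙ) / t ^ k else 0) := by
    refine Finset.sum_nonneg fun k _ => ?_
    split_ifs
    · positivity
    · exact le_rfl
  linarith

lemma latala_moment_le {f g : Ω → ℝ} {k : ℕ} (hk1 : 1 ≤ k) {c : ℝ} (hc : 0 < c)
    (h : (∫ ω, |g ω| ^ (k:ℝ) ∂ℙ) ^ (1/(k:ℝ)) ≤ c * (∫ ω, |f ω| ^ (k:ℝ) ∂ℙ) ^ (1/(k:ℝ))) :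
    (∫ ω, |g ω| ^ k ∂ℙ) ≤ c ^ k * ∫ ω, |f ω| ^ k ∂ℙ := by
  have hg0 : 0 ≤ ∫ ω, |g ω| ^ ((k:ℕ):ℝ) ∂ℙ :=
    integral_nonneg fun ω => Real.rpow_nonneg (abs_nonneg _) _
  have hf0 : 0 ≤ ∫ ω, |f ω| ^ ((k:ℕ):ℝ) ∂ℙ :=
    integral_nonneg fun ω => Real.rpow_nonneg (abs_nonneg _) _
  have hrw : ∀ h : Ω → ℝ, (∫ ω, |h ω| ^ ((k:ℕ):ℝ) ∂ℙ) = ∫ ω, |h ω| ^ k ∂ℙ := fun h => by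
    simp [Real.rpow_natCast]
  have hkne : k ≠ 0 := by omega
  have key := pow_le_pow_left₀ (Real.rpow_nonneg hg0 _) h k
  rw [one_div, mul_pow, Real.rpow_inv_natCast_pow hg0 hkne,
    Real.rpow_inv_natCast_pow hf0 hkne, hrw, hrw] at key
  exact key

lemma latala_transfer {n : ℕ} {p : ℕ} (hpe : Even p)
    (Y Z : Fin n → Ω → ℝ) (hY : ∀ i, MemLp (Y i) p ℙ) (hZ : ∀ i, MemLp (Z i) p ℙ)
    {c : ℝ} (hc : 0 < c)
    (hmom : ∀ i k, Even k → 1 ≤ k → k ≤ p →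
      (∫ ω, |Z i ω| ^ k ∂ℙ) ≤ c ^ k * ∫ ω, |Y i ω| ^ k ∂ℙ)
    {t : ℝ} (ht : 0 < t)
    (hmem : ∑ i, Real.log (∫ ω, (|Y i ω / t + 1| ^ p + |-(Y i ω) / t + 1| ^ p) / 2 ∂ℙ) ≤ p) :
    ∑ i, Real.log
      (∫ ω, (|Z i ω / (c * t) + 1| ^ p + |-(Z i ω) / (c * t) + 1| ^ p) / 2 ∂ℙ) ≤ p := by
  refine le_trans (Finset.sum_le_sum fun i _ => ?_) hmem
  rw [latala_expand hpe (hZ i) (mul_pos hc ht), latala_expand hpe (hY i) ht]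
  refine Real.log_le_log (lt_of_lt_of_le one_pos (latala_one_le_G (mul_pos hc ht)))
    (Finset.sum_le_sum fun k hk => ?_)
  by_cases hke : Even k
  · rw [if_pos hke, if_pos hke]
    rcases Nat.eq_zero_or_pos k with rfl | hk1
    · simp
    · have h := hmom i k hke hk1 (Nat.lt_succ_iff.mp (Finset.mem_range.mp hk))
      have htk : (0:ℝ) < t ^ k := pow_pos ht k
      have hck : (0:ℝ) < c ^ k := pow_pos hc k
      have hC : (0:ℝ) ≤ (p.choose k : ℝ) := Nat.cast_nonneg _
      rw [mul_pow, div_le_div_iff₀ (by positivity) htk]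
      have := mul_le_mul_of_nonneg_left h (mul_nonneg hC htk.le)
      nlinarith [this]
  · simp [hke]

lemma latala_nonempty {n : ℕ} {p : ℕ} (hpe : Even p) (hp1 : 1 ≤ p)
    (Y : Fin n → Ω → ℝ) (hY : ∀ i, MemLp (Y i) p ℙ) :
    ∃ t : ℝ, 0 < t ∧ ∑ i, Real.log
      (∫ ω, (|Y i ω / t + 1| ^ p + |-(Y i ω) / t + 1| ^ p) / 2 ∂ℙ) ≤ p := by
  set R : Fin n → ℝ := fun i => ∑ k ∈ Finset.range (p + 1),
    (if Even k ∧ k ≠ 0 then (p.choose k : ℝ) * (∫ ω, |Y i ω| ^ k ∂ℙ) else 0) with hR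
  have hRnn : ∀ i, 0 ≤ R i := by
    intro i
    refine Finset.sum_nonneg fun k _ => ?_
    split_ifs
    · exact mul_nonneg (Nat.cast_nonneg _) latala_mom_nonneg
    · exact le_rfl
  have hSnn : 0 ≤ ∑ i, R i := Finset.sum_nonneg fun i _ => hRnn i
  set T : ℝ := Real.sqrt (∑ i, R i) + 1 with hT
  have hT1 : 1 ≤ T := le_add_of_nonneg_left (Real.sqrt_nonneg _)
  have hT0 : 0 < T := lt_of_lt_of_le one_pos hT1
  have hT2 : ∑ i, R i + 1 ≤ T ^ 2 := by
    have hs : Real.sqrt (∑ i, R i) ^ 2 = ∑ i, R i := Real.sq_sqrt hSnn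
    rw [hT]
    nlinarith [Real.sqrt_nonneg (∑ i, R i), hs]
  refine ⟨T, hT0, ?_⟩
  have hbound : ∀ i, Real.log
      (∫ ω, (|Y i ω / T + 1| ^ p + |-(Y i ω) / T + 1| ^ p) / 2 ∂ℙ) ≤ R i / T ^ 2 := by
    intro i
    rw [latala_expand hpe (hY i) hT0]
    refine le_trans (Real.log_le_sub_one_of_pos
      (lt_of_lt_of_le one_pos (latala_one_le_G hT0))) ?_
    rw [latala_split (fun k => (p.choose k : ℝ) * (∫ ω, |Y i ω| ^ k ∂ℙ) / T ^ k) (by simp)]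
    have : ∑ k ∈ Finset.range (p + 1),
        (if Even k ∧ k ≠ 0 then (p.choose k : ℝ) * (∫ ω, |Y i ω| ^ k ∂ℙ) / T ^ k else 0)
        ≤ R i / T ^ 2 := by
      rw [hR, Finset.sum_div]
      refine Finset.sum_le_sum fun k _ => ?_
      split_ifs with hk
      · have hk2 : 2 ≤ k := by
          rcases hk.1 with ⟨m, hm⟩
          omega
        have h1 : T ^ 2 ≤ T ^ k := pow_le_pow_right₀ hT1 hk2
        exact div_le_div_of_nonneg_left (mul_nonneg (Nat.cast_nonneg _) latala_mom_nonneg)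
          (by positivity) h1
      · simp
    linarith
  calc ∑ i, Real.log (∫ ω, (|Y i ω / T + 1| ^ p + |-(Y i ω) / T + 1| ^ p) / 2 ∂ℙ)
      ≤ ∑ i, R i / T ^ 2 := Finset.sum_le_sum fun i _ => hbound i
    _ = (∑ i, R i) / T ^ 2 := by rw [Finset.sum_div]
    _ ≤ (∑ i, R i) / (∑ i, R i + 1) := by
        apply div_le_div_of_nonneg_left hSnn (by positivity) hT2
    _ ≤ 1 := by
        rw [div_le_one (by positivity)]; linarith
    _ ≤ p := by exact_mod_cast hp1

end Aux

/-- If the centered independent sequences `X` and `X̃` satisfy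
`a‖X_i‖_q ≤ ‖X̃_i‖_q ≤ b‖X_i‖_q` for all real `1 ≤ q ≤ p` (`p ≥ 2` even),
then `a |||X|||_p ≤ |||X̃|||_p ≤ b |||X|||_p`. -/
theorem latala_norm_comparison
    {Ω : Type*} [MeasureSpace Ω] [IsProbabilityMeasure (ℙ : Measure Ω)]
    {n : ℕ} (X Xt : Fin n → Ω → ℝ)
    (hXmeas : ∀ i, Measurable (X i)) (hXtmeas : ∀ i, Measurable (Xt i))
    (hXind : iIndepFun X ℙ)
    (hXtind : iIndepFun Xt ℙ)
    (hXcent : ∀ i, ∫ ω, X i ω ∂ℙ = 0) (hXtcent : ∀ i, ∫ ω, Xt i ω ∂ℙ = 0)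
    (p : ℕ) (hp : 2 ≤ p) (hpeven : Even p)
    (hXp : ∀ i, MemLp (X i) p ℙ) (hXtp : ∀ i, MemLp (Xt i) p ℙ)
    (a b : ℝ) (ha : 0 < a) (hb : 0 < b)
    (hcomp : ∀ i, ∀ q : ℝ, 1 ≤ q → q ≤ p →
      a * (∫ ω, |X i ω| ^ q ∂ℙ) ^ (1 / q) ≤ (∫ ω, |Xt i ω| ^ q ∂ℙ) ^ (1 / q) ∧
      (∫ ω, |Xt i ω| ^ q ∂ℙ) ^ (1 / q) ≤ b * (∫ ω, |X i ω| ^ q ∂ℙ) ^ (1 / q)) :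
    a * latalaNorm X p ≤ latalaNorm Xt p ∧
    latalaNorm Xt p ≤ b * latalaNorm X p := by
  have hp1 : 1 ≤ p := by omega
  have hmomb : ∀ i k, Even k → 1 ≤ k → k ≤ p →
      (∫ ω, |Xt i ω| ^ k ∂ℙ) ≤ b ^ k * ∫ ω, |X i ω| ^ k ∂ℙ := by
    intro i k hke hk1 hkp
    exact latala_moment_le hk1 hb
      ((hcomp i k (by exact_mod_cast hk1) (by exact_mod_cast hkp)).2)
  have hmoma : ∀ i k, Even k → 1 ≤ k → k ≤ p →
      (∫ ω, |X i ω| ^ k ∂ℙ) ≤ a⁻¹ ^ k * ∫ ω, |Xt i ω| ^ k ∂ℙ := by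
    intro i k hke hk1 hkp
    have h := (hcomp i k (by exact_mod_cast hk1) (by exact_mod_cast hkp)).1
    refine latala_moment_le hk1 (inv_pos.mpr ha) ?_
    rw [inv_mul_eq_div, le_div_iff₀ ha]
    linarith [h]
  unfold latalaNorm
  set SX : Set ℝ := {t : ℝ | 0 < t ∧
    ∑ i, Real.log
        (∫ ω, (|X i ω / t + 1| ^ p + |-(X i ω) / t + 1| ^ p) / 2 ∂ℙ) ≤ p} with hSX
  set SXt : Set ℝ := {t : ℝ | 0 < t ∧
    ∑ i, Real.log
        (∫ ω, (|Xt i ω / t + 1| ^ p + |-(Xt i ω) / t + 1| ^ p) / 2 ∂ℙ) ≤ p} with hSXt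
  have hbddX : BddBelow SX := ⟨0, fun t ht => le_of_lt ht.1⟩
  have hbddXt : BddBelow SXt := ⟨0, fun t ht => le_of_lt ht.1⟩
  have hneX : SX.Nonempty := by
    obtain ⟨t0, ht0, hm0⟩ := latala_nonempty hpeven hp1 X hXp
    exact ⟨t0, ht0, hm0⟩
  have hneXt : SXt.Nonempty := by
    obtain ⟨t0, ht0, hm0⟩ := latala_nonempty hpeven hp1 Xt hXtp
    exact ⟨t0, ht0, hm0⟩
  constructor
  · refine le_csInf hneXt fun t ht => ?_
    have h1 : a⁻¹ * t ∈ SX :=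
      ⟨mul_pos (inv_pos.mpr ha) ht.1,
        latala_transfer hpeven Xt X hXtp hXp (inv_pos.mpr ha) hmoma ht.1 ht.2⟩
    have h2 : sInf SX ≤ a⁻¹ * t := csInf_le hbddX h1
    calc a * sInf SX ≤ a * (a⁻¹ * t) := mul_le_mul_of_nonneg_left h2 ha.le
      _ = t := by field_simp
  · have key : ∀ t ∈ SX, sInf SXt ≤ b * t := fun t ht =>
      csInf_le hbddXt
        ⟨mul_pos hb ht.1, latala_transfer hpeven X Xt hXp hXtp hb hmomb ht.1 ht.2⟩
    have h3 : sInf SXt / b ≤ sInf SX := by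
      refine le_csInf hneX fun t ht => ?_
      rw [div_le_iff₀ hb]
      linarith [key t ht]
    rw [div_le_iff₀ hb] at h3
    linarith [h3]
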